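/- Let P be a polynomial of degree d ≥ 2 with connected Julia set J_P and Böttcher coordinate Ψ as in the context, and let 𝒟 be the finest partition of J_P defined there. Then 𝒟 is invariant under P: for every element D ∈ 𝒟, the image P(D) is again an element of 𝒟. -/

import Mathlib

open Set Filter Topology Metric

noncomputable section


/-- The point `e^{2πiα}` on the unit circle corresponding to an angle `α ∈ ℝ/ℤ`. -/
def circlePoint (α : AddCircle (1 : ℝ)) : ℂ := (AddCircle.toCircle α : ℂ)

/-- The basin of infinity of a compact set `Q ⊆ ℂ`: the union of the unbounded
connected components of `ℂ ∖ Q` (for `Q` a continuum there is exactly one). -/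
def basin (Q : Set ℂ) : Set ℂ :=
  {z | z ∉ Q ∧ ¬ Bornology.IsBounded (connectedComponentIn Qᶜ z)}

/-- `Q` is an unshielded continuum: a compact connected nonempty subset of `ℂ`
which coincides with the boundary of its basin of infinity. -/
def Unshielded (Q : Set ℂ) : Prop :=
  IsCompact Q ∧ IsConnected Q ∧ Q = frontier (basin Q)

/-- `Ψ` is a Riemann map for the basin of infinity of `Q`: a holomorphic bijection
from `{z : |z| > 1}` onto the basin of infinity. -/
def RiemannMap (Q : Set ℂ) (Ψ : ℂ → ℂ) : Prop :=
  DifferentiableOn ℂ Ψ {z | 1 < ‖z‖} ∧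
  Set.BijOn Ψ {z | 1 < ‖z‖} (basin Q)

/-- The impression of the external angle `α`. -/
def impression (Ψ : ℂ → ℂ) (α : AddCircle (1 : ℝ)) : Set ℂ :=
  {w | ∃ z : ℕ → ℂ, (∀ n, 1 < ‖z n‖) ∧
        Tendsto z atTop (𝓝 (circlePoint α)) ∧
        Tendsto (fun n => Ψ (z n)) atTop (𝓝 w)}

/-- The external ray of angle `α`. -/
def extRay (Ψ : ℂ → ℂ) (α : AddCircle (1 : ℝ)) : Set ℂ :=
  Ψ '' {z | ∃ r : ℝ, 1 < r ∧ z = (r : ℂ) * circlePoint α}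

/-- The principal set of the external angle `α`. -/
def principalSet (Ψ : ℂ → ℂ) (α : AddCircle (1 : ℝ)) : Set ℂ :=
  closure (extRay Ψ α) \ extRay Ψ α

/-- A closed equivalence relation (its graph, within `Q × Q`, is closed) such that
every impression is contained in a single equivalence class. -/
structure IsClosedEquivRespImp (Q : Set ℂ) (Ψ : ℂ → ℂ) (r : ℂ → ℂ → Prop) : Prop where
  equivalence : Equivalence r
  closedGraph : IsClosed {p : ℂ × ℂ | p.1 ∈ Q ∧ p.2 ∈ Q ∧ r p.1 p.2}
  resp : ∀ α : AddCircle (1 : ℝ), ∀ x ∈ impression Ψ α, ∀ y ∈ impression Ψ α, r x y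

/-- The relation `≈₀`: the intersection of all closed equivalence relations on `Q`
in which every impression is contained in a single class. -/
def finestRel (Q : Set ℂ) (Ψ : ℂ → ℂ) (x y : ℂ) : Prop :=
  ∀ r : ℂ → ℂ → Prop, IsClosedEquivRespImp Q Ψ r → r x y

/-- The partition `𝒟` of `Q` whose elements are the connected components of the
`≈₀`-classes; its elements are the fibers of the finest monotone map of `Q`
onto a locally connected continuum. -/
def finestPartition (Q : Set ℂ) (Ψ : ℂ → ℂ) : Set (Set ℂ) :=
  {D | ∃ x ∈ Q, D = connectedComponentIn {y ∈ Q | finestRel Q Ψ x y} x}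

/-- A ray-compactum in `Q`: a compact subset of `Q` together with a closed set of
angles whose principal sets it contains and in the union of whose impressions
it is contained. -/
structure RayCompactum (Q : Set ℂ) (Ψ : ℂ → ℂ) where
  carrier : Set ℂ
  angles : Set (AddCircle (1 : ℝ))
  carrier_subset : carrier ⊆ Q
  isCompact_carrier : IsCompact carrier
  isClosed_angles : IsClosed angles
  principal_subset : ∀ θ ∈ angles, principalSet Ψ θ ⊆ carrier
  subset_impressions : carrier ⊆ ⋃ θ ∈ angles, impression Ψ θ

/-- `C̃ = C ∪ ⋃_{θ ∈ Θ(C)} R_θ`. -/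
def RayCompactum.tilde {Q : Set ℂ} {Ψ : ℂ → ℂ} (C : RayCompactum Q Ψ) : Set ℂ :=
  C.carrier ∪ ⋃ θ ∈ C.angles, extRay Ψ θ

/-- A ray-compactum `C` ray-separates the sets `A` and `B`. -/
def RaySeparates {Q : Set ℂ} {Ψ : ℂ → ℂ} (C : RayCompactum Q Ψ) (A B : Set ℂ) : Prop :=
  C.carrier ∩ (A ∪ B) = ∅ ∧
  ∀ z ∈ closure (basin Q) \ C.tilde,
    ¬ ((connectedComponentIn (closure (basin Q) \ C.tilde) z ∩ A).Nonempty ∧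
       (connectedComponentIn (closure (basin Q) \ C.tilde) z ∩ B).Nonempty)

/-- A ray-compactum `C` ray-separates a set `X` if it ray-separates some
pair of (distinct) points of `X`. -/
def RaySeparatesSet {Q : Set ℂ} {Ψ : ℂ → ℂ} (C : RayCompactum Q Ψ) (X : Set ℂ) : Prop :=
  ∃ x ∈ X, ∃ y ∈ X, x ≠ y ∧ RaySeparates C {x} {y}

/-- A well-slicing family for a continuum `X ⊆ Q`. -/
structure IsWellSlicing {Q : Set ℂ} {Ψ : ℂ → ℂ}
    (𝒞 : Set (RayCompactum Q Ψ)) (X : Set ℂ) : Prop where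
  nontrivial : ∃ C₁ ∈ 𝒞, ∃ C₂ ∈ 𝒞, C₁ ≠ C₂
  pairwiseDisjoint : ∀ C₁ ∈ 𝒞, ∀ C₂ ∈ 𝒞, C₁ ≠ C₂ → Disjoint C₁.carrier C₂.carrier
  separates : ∀ C ∈ 𝒞, RaySeparatesSet C X
  middle : ∀ C₁ ∈ 𝒞, ∀ C₂ ∈ 𝒞, C₁ ≠ C₂ → ∃ C₃ ∈ 𝒞, RaySeparates C₃ C₁.carrier C₂.carrier

/-- The polynomial `P` as a self-map of `ℂ`. -/
def polyMap (P : Polynomial ℂ) : ℂ → ℂ := fun z => P.eval z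

/-- The filled-in Julia set: the set of points with bounded forward orbit. -/
def filledJulia (P : Polynomial ℂ) : Set ℂ :=
  {z | Bornology.IsBounded (Set.range fun n : ℕ => (polyMap P)^[n] z)}

/-- The Julia set: the boundary of the filled-in Julia set. -/
def juliaSet (P : Polynomial ℂ) : Set ℂ := frontier (filledJulia P)

/-- `Ψ` is a Böttcher coordinate for `P`: a holomorphic bijection from
`{z : |z| > 1}` onto the basin of infinity `ℂ ∖ K_P` conjugating `z ↦ z^d`
to `P`. -/
def BoettcherMap (P : Polynomial ℂ) (Ψ : ℂ → ℂ) : Prop :=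
  DifferentiableOn ℂ Ψ {z | 1 < ‖z‖} ∧
  Set.BijOn Ψ {z | 1 < ‖z‖} (filledJulia P)ᶜ ∧
  ∀ z : ℂ, 1 < ‖z‖ → Ψ (z ^ P.natDegree) = polyMap P (Ψ z)

/-! ### Auxiliary development -/

namespace FinestAux
set_option linter.unusedSectionVars false

open Complex

/-! #### Circle points -/

lemma circlePoint_abs (α : AddCircle (1:ℝ)) : ‖circlePoint α‖ = 1 :=
  Circle.norm_coe _

lemma circlePoint_ne_zero (α : AddCircle (1:ℝ)) : circlePoint α ≠ 0 := by
  intro h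
  have h1 := circlePoint_abs α
  rw [h] at h1; simp at h1

lemma circlePoint_nsmul (n : ℕ) (α : AddCircle (1:ℝ)) :
    circlePoint (n • α) = circlePoint α ^ n := by
  induction n with
  | zero => simp [circlePoint, zero_nsmul]
  | succ k ih =>
      simp only [circlePoint, succ_nsmul, AddCircle.toCircle_add, Circle.coe_mul, pow_succ]
      rw [show ((AddCircle.toCircle (k • α) : Circle) : ℂ) = circlePoint (k • α) from rfl, ih]
      rfl

lemma circlePoint_injective : Function.Injective circlePoint := by
  intro a b h
  exact AddCircle.injective_toCircle one_ne_zero (Subtype.ext h)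

lemma circlePoint_surjective {u : ℂ} (hu : ‖u‖ = 1) :
    ∃ α : AddCircle (1:ℝ), circlePoint α = u := by
  refine ⟨((u.arg / (2 * Real.pi) : ℝ) : AddCircle (1:ℝ)), ?_⟩
  rw [circlePoint, AddCircle.toCircle_apply_mk]
  have hπ : (2 * Real.pi) ≠ 0 := by
    have := Real.pi_pos; intro h; nlinarith
  have h2 : 2 * Real.pi / 1 * (u.arg / (2 * Real.pi)) = u.arg := by field_simp
  rw [h2, Circle.coe_exp]
  conv_rhs => rw [← Complex.norm_mul_exp_arg_mul_I u]
  rw [hu]; simp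

section Poly

variable {P : Polynomial ℂ} (hd : 2 ≤ P.natDegree)
include hd

lemma polyMap_continuous : Continuous (polyMap P) := P.continuous

lemma polyMap_isOpenMap : IsOpenMap (polyMap P) := by
  have hana : AnalyticOnNhd ℂ (polyMap P) Set.univ :=
    (P.differentiable.differentiableOn).analyticOnNhd isOpen_univ
  rcases hana.is_constant_or_isOpen isPreconnected_univ with h | h
  · exfalso
    rcases h with ⟨v, hv⟩
    have hP : P = Polynomial.C v := Polynomial.funext fun r => by
      simpa [polyMap, Polynomial.eval_C] using hv r (Set.mem_univ r)
    rw [hP] at hd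
    simp [Polynomial.natDegree_C] at hd
  · exact fun s hs => h s (Set.subset_univ s) hs

lemma exists_escape :
    ∃ R : ℝ, 1 ≤ R ∧ ∀ w : ℂ, R ≤ ‖w‖ →
      2 * ‖w‖ ≤ ‖polyMap P w‖ := by
  classical
  have hP0 : P ≠ 0 := fun h => by simp [h] at hd
  set d := P.natDegree with hdd
  set c := ‖P.leadingCoeff‖ with hc
  have hc0 : 0 < c := by
    rw [hc]
    exact norm_pos_iff.mpr (Polynomial.leadingCoeff_ne_zero.mpr hP0)
  set Cs := ∑ i ∈ Finset.range d, ‖P.coeff i‖ with hCs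
  have hCs0 : 0 ≤ Cs := Finset.sum_nonneg fun _ _ => norm_nonneg _
  refine ⟨max 1 ((Cs + 2) / c), le_max_left _ _, ?_⟩
  intro w hw
  have hw1 : 1 ≤ ‖w‖ := le_trans (le_max_left _ _) hw
  have hw0 : 0 ≤ ‖w‖ := le_trans zero_le_one hw1
  have hw2 : (Cs + 2) / c ≤ ‖w‖ := le_trans (le_max_right _ _) hw
  have hwc : Cs + 2 ≤ c * ‖w‖ := by
    rw [div_le_iff₀ hc0] at hw2; linarith
  have heval : polyMap P w
      = ∑ i ∈ Finset.range d, P.coeff i * w ^ i + P.leadingCoeff * w ^ d := by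
    show P.eval w = _
    rw [Polynomial.eval_eq_sum_range, Finset.sum_range_succ]
    rfl
  have hpow : ∀ i ∈ Finset.range d, ‖P.coeff i * w ^ i‖
      ≤ ‖P.coeff i‖ * ‖w‖ ^ (d - 1) := by
    intro i hi
    rw [norm_mul, norm_pow]
    refine mul_le_mul_of_nonneg_left ?_ (norm_nonneg _)
    exact pow_le_pow_right₀ hw1 (by have := Finset.mem_range.mp hi; omega)
  have hsum : ‖∑ i ∈ Finset.range d, P.coeff i * w ^ i‖
      ≤ Cs * ‖w‖ ^ (d - 1) := by
    calc ‖∑ i ∈ Finset.range d, P.coeff i * w ^ i‖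
        ≤ ∑ i ∈ Finset.range d, ‖P.coeff i * w ^ i‖ :=
          norm_sum_le _ _
      _ ≤ ∑ i ∈ Finset.range d, ‖P.coeff i‖ * ‖w‖ ^ (d - 1) :=
          Finset.sum_le_sum hpow
      _ = Cs * ‖w‖ ^ (d - 1) := by rw [hCs, Finset.sum_mul]
  have hlead : ‖P.leadingCoeff * w ^ d‖ = c * ‖w‖ ^ d := by
    rw [norm_mul, norm_pow, hc]
  have htri : c * ‖w‖ ^ d
      ≤ ‖polyMap P w‖ + Cs * ‖w‖ ^ (d - 1) := by
    have h1 : ‖P.leadingCoeff * w ^ d‖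
        ≤ ‖polyMap P w‖ + ‖∑ i ∈ Finset.range d, P.coeff i * w ^ i‖ := by
      have : P.leadingCoeff * w ^ d
          = polyMap P w + -(∑ i ∈ Finset.range d, P.coeff i * w ^ i) := by
        rw [heval]; ring
      rw [this]
      refine le_trans (norm_add_le _ _) ?_
      rw [norm_neg]
    rw [hlead] at h1
    linarith
  have hdsplit : ‖w‖ ^ d = ‖w‖ ^ (d - 1) * ‖w‖ := by
    rw [← pow_succ]
    congr 1
    omega
  have hge : ‖w‖ ≤ ‖w‖ ^ (d - 1) := by
    calc ‖w‖ = ‖w‖ ^ 1 := (pow_one _).symm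
      _ ≤ ‖w‖ ^ (d - 1) := pow_le_pow_right₀ hw1 (by omega)
  have hpownn : 0 ≤ ‖w‖ ^ (d - 1) := pow_nonneg hw0 _
  nlinarith [htri, hwc, hge, hpownn, hdsplit]

lemma iterate_escape {R : ℝ} (hR1 : 1 ≤ R)
    (hR : ∀ w : ℂ, R ≤ ‖w‖ → 2 * ‖w‖ ≤ ‖polyMap P w‖)
    {w : ℂ} (hw : R ≤ ‖w‖) (k : ℕ) :
    R ≤ ‖(polyMap P)^[k] w‖ ∧
      2 ^ k * ‖w‖ ≤ ‖(polyMap P)^[k] w‖ := by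
  induction k with
  | zero => simpa using hw
  | succ k ih =>
    obtain ⟨h1, h2⟩ := ih
    rw [Function.iterate_succ_apply']
    have h3 := hR _ h1
    have h0 : (0:ℝ) ≤ ‖w‖ := norm_nonneg _
    have h2k : (0:ℝ) < 2 ^ k := by positivity
    constructor
    · nlinarith
    · rw [pow_succ]
      nlinarith

lemma filledJulia_eq {R : ℝ} (hR1 : 1 ≤ R)
    (hR : ∀ w : ℂ, R ≤ ‖w‖ → 2 * ‖w‖ ≤ ‖polyMap P w‖) :
    filledJulia P = ⋂ n : ℕ, (fun z => (polyMap P)^[n] z) ⁻¹' Metric.closedBall 0 R := by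
  ext z
  simp only [filledJulia, Set.mem_setOf_eq, Set.mem_iInter, Set.mem_preimage,
    Metric.mem_closedBall, Complex.dist_eq, sub_zero]
  constructor
  · intro hb n
    by_contra hn
    push_neg at hn
    obtain ⟨M, hM⟩ := hb.subset_closedBall 0
    obtain ⟨k, hk⟩ := pow_unbounded_of_one_lt M (one_lt_two (α := ℝ))
    have hesc := iterate_escape hd hR1 hR (le_of_lt hn) k
    have hmem : (polyMap P)^[k + n] z ∈ Metric.closedBall (0:ℂ) M :=
      hM ⟨k + n, rfl⟩
    rw [Metric.mem_closedBall, Complex.dist_eq, sub_zero] at hmem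
    rw [Function.iterate_add_apply] at hmem
    have h1 : (1:ℝ) ≤ ‖(polyMap P)^[n] z‖ := le_trans hR1 (le_of_lt hn)
    have h2k : (0:ℝ) < 2 ^ k := by positivity
    nlinarith [hesc.2]
  · intro h
    refine Bornology.IsBounded.subset (Metric.isBounded_closedBall (x := (0:ℂ)) (r := R)) ?_
    rintro _ ⟨n, rfl⟩
    simp only [Metric.mem_closedBall, Complex.dist_eq, sub_zero]
    exact h n

lemma filledJulia_isClosed : IsClosed (filledJulia P) := by
  obtain ⟨R, hR1, hR⟩ := exists_escape hd
  rw [filledJulia_eq hd hR1 hR]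
  exact isClosed_iInter fun n =>
    IsClosed.preimage ((polyMap_continuous hd).iterate n) Metric.isClosed_closedBall

lemma filledJulia_isCompact : IsCompact (filledJulia P) := by
  obtain ⟨R, hR1, hR⟩ := exists_escape hd
  refine Metric.isCompact_of_isClosed_isBounded (filledJulia_isClosed hd) ?_
  refine Bornology.IsBounded.subset (Metric.isBounded_closedBall (x := (0:ℂ)) (r := R)) ?_
  intro z hz
  rw [filledJulia_eq hd hR1 hR] at hz
  have := Set.mem_iInter.mp hz 0
  simpa using this

lemma juliaSet_isClosed : IsClosed (juliaSet P) := isClosed_frontier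

lemma juliaSet_subset_filled : juliaSet P ⊆ filledJulia P := by
  rw [juliaSet, (filledJulia_isClosed hd).frontier_eq]
  exact Set.diff_subset

lemma juliaSet_isCompact : IsCompact (juliaSet P) :=
  (filledJulia_isCompact hd).of_isClosed_subset isClosed_frontier (juliaSet_subset_filled hd)

lemma mem_filled_iff (z : ℂ) : polyMap P z ∈ filledJulia P ↔ z ∈ filledJulia P := by
  simp only [filledJulia, Set.mem_setOf_eq]
  constructor
  · intro h
    have hsub : Set.range (fun n : ℕ => (polyMap P)^[n] z)
        ⊆ {z} ∪ Set.range (fun n : ℕ => (polyMap P)^[n] (polyMap P z)) := by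
      rintro _ ⟨n, rfl⟩
      cases n with
      | zero => exact Or.inl rfl
      | succ k => exact Or.inr ⟨k, (Function.iterate_succ_apply _ _ _).symm⟩
    exact ((Bornology.isBounded_singleton).union h).subset hsub
  · intro h
    have hsub : Set.range (fun n : ℕ => (polyMap P)^[n] (polyMap P z))
        ⊆ Set.range (fun n : ℕ => (polyMap P)^[n] z) := by
      rintro _ ⟨n, rfl⟩
      exact ⟨n + 1, Function.iterate_succ_apply _ _ _⟩
    exact h.subset hsub

lemma polyMap_mapsTo_julia : Set.MapsTo (polyMap P) (juliaSet P) (juliaSet P) := by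
  intro z hz
  rw [juliaSet, (filledJulia_isClosed hd).frontier_eq] at hz ⊢
  obtain ⟨hzK, hzI⟩ := hz
  refine ⟨(mem_filled_iff hd z).mpr hzK, fun hint => hzI ?_⟩
  have hopen : IsOpen ((polyMap P) ⁻¹' interior (filledJulia P)) :=
    isOpen_interior.preimage (polyMap_continuous hd)
  have hsub : (polyMap P) ⁻¹' interior (filledJulia P) ⊆ filledJulia P := fun y hy =>
    (mem_filled_iff hd y).mp (interior_subset hy)
  exact interior_maximal hsub hopen hint

lemma polyMap_preimage_julia {z : ℂ} (hz : polyMap P z ∈ juliaSet P) : z ∈ juliaSet P := by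
  rw [juliaSet, (filledJulia_isClosed hd).frontier_eq] at hz ⊢
  obtain ⟨hzK, hzI⟩ := hz
  refine ⟨(mem_filled_iff hd z).mp hzK, fun hint => hzI ?_⟩
  have hopen : IsOpen (polyMap P '' interior (filledJulia P)) :=
    polyMap_isOpenMap hd _ isOpen_interior
  have hsub : polyMap P '' interior (filledJulia P) ⊆ filledJulia P := by
    rintro _ ⟨y, hy, rfl⟩
    exact (mem_filled_iff hd y).mpr (interior_subset hy)
  exact interior_maximal hsub hopen ⟨z, hint, rfl⟩

end Poly

/-! #### Nested intersections of continua -/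

lemma preconnected_iInter_of_antitone (C : ℕ → Set ℂ)
    (hcomp : ∀ n, IsCompact (C n)) (hconn : ∀ n, IsPreconnected (C n))
    (hanti : ∀ n, C (n + 1) ⊆ C n) : IsPreconnected (⋂ n, C n) := by
  intro U V hU hV hcover ⟨p, hpA, hpU⟩ ⟨q, hqA, hqV⟩
  by_contra hne
  rw [Set.not_nonempty_iff_eq_empty] at hne
  have hne' := Set.eq_empty_iff_forall_notMem.mp hne
  set A := (⋂ n, C n) \ V with hA
  set B := (⋂ n, C n) \ U with hB
  have hclosed : IsClosed (⋂ n, C n) := isClosed_iInter fun n => (hcomp n).isClosed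
  have hAclosed : IsClosed A := hclosed.sdiff hV
  have hBclosed : IsClosed B := hclosed.sdiff hU
  have hdisj : Disjoint A B := by
    rw [Set.disjoint_left]
    rintro x ⟨hx1, hx2⟩ ⟨hx3, hx4⟩
    rcases hcover hx1 with h | h
    exacts [hx4 h, hx2 h]
  obtain ⟨U', V', hU', hV', hAU', hBV', hd'⟩ := normal_separation hAclosed hBclosed hdisj
  have hcoverAB : (⋂ n, C n) ⊆ U' ∪ V' := by
    intro x hx
    by_cases hxV : x ∈ V
    · by_cases hxU : x ∈ U
      · exact absurd ⟨hx, hxU, hxV⟩ (hne' x)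
      · exact Or.inr (hBV' ⟨hx, hxU⟩)
    · exact Or.inl (hAU' ⟨hx, hxV⟩)
  have hexN : ∃ N, C N ⊆ U' ∪ V' := by
    by_contra hno
    push_neg at hno
    have hne2 : ∀ n, (C n \ (U' ∪ V')).Nonempty := by
      intro n
      rcases Set.not_subset.mp (hno n) with ⟨x, hx1, hx2⟩
      exact ⟨x, hx1, hx2⟩
    obtain ⟨x, hx⟩ := IsCompact.nonempty_iInter_of_sequence_nonempty_isCompact_isClosed
      (fun n => C n \ (U' ∪ V'))
      (fun n => Set.diff_subset_diff_left (hanti n))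
      hne2
      ((hcomp 0).diff (hU'.union hV'))
      (fun n => ((hcomp n).isClosed).sdiff (hU'.union hV'))
    rw [Set.mem_iInter] at hx
    have hx1 : x ∈ ⋂ n, C n := Set.mem_iInter.mpr fun n => (hx n).1
    exact (hx 0).2 (hcoverAB hx1)
  obtain ⟨N, hN⟩ := hexN
  have hpA' : p ∈ A := ⟨hpA, fun hpV => hne' p ⟨hpA, hpU, hpV⟩⟩
  have hqB' : q ∈ B := ⟨hqA, fun hqU => hne' q ⟨hqA, hqU, hqV⟩⟩
  obtain ⟨x, hx1, hx2, hx3⟩ := hconn N U' V' hU' hV' hN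
    ⟨p, Set.mem_iInter.mp hpA N, hAU' hpA'⟩
    ⟨q, Set.mem_iInter.mp hqA N, hBV' hqB'⟩
  exact (Set.disjoint_left.mp hd' hx2) hx3

/-! #### The Böttcher map -/

section Psi

variable {P : Polynomial ℂ} (hd : 2 ≤ P.natDegree) {Ψ : ℂ → ℂ} (hΨ : BoettcherMap P Ψ)

lemma dom_isOpen : IsOpen {z : ℂ | 1 < ‖z‖} :=
  isOpen_lt continuous_const continuous_norm

lemma dom_preconnected : IsPreconnected {z : ℂ | 1 < ‖z‖} := by
  have himg : {z : ℂ | 1 < ‖z‖}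
      = (fun p : ℝ × ℝ => (p.1 : ℂ) * Complex.exp (p.2 * Complex.I)) ''
        (Set.Ioi 1 ×ˢ (Set.univ : Set ℝ)) := by
    ext z
    constructor
    · intro hz
      exact ⟨(‖z‖, z.arg), ⟨hz, Set.mem_univ _⟩, Complex.norm_mul_exp_arg_mul_I z⟩
    · rintro ⟨⟨s, t⟩, ⟨hs, -⟩, rfl⟩
      simp only [Set.mem_setOf_eq, norm_mul, Complex.norm_real, Real.norm_eq_abs, Complex.norm_exp_ofReal_mul_I,
        mul_one]
      rw [abs_of_pos (lt_trans zero_lt_one hs)]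
      exact hs
  rw [himg]
  refine IsPreconnected.image ?_ _ ?_
  · exact ((convex_Ioi (1:ℝ)).prod convex_univ).isPreconnected
  · refine Continuous.continuousOn ?_
    exact (Complex.continuous_ofReal.comp continuous_fst).mul
      (Complex.continuous_exp.comp ((Complex.continuous_ofReal.comp continuous_snd).mul
        continuous_const))

include hΨ

lemma psi_continuousOn : ContinuousOn Ψ {z : ℂ | 1 < ‖z‖} := hΨ.1.continuousOn

lemma psi_injOn : Set.InjOn Ψ {z : ℂ | 1 < ‖z‖} := hΨ.2.1.injOn

lemma psi_image : Ψ '' {z : ℂ | 1 < ‖z‖} = (filledJulia P)ᶜ := hΨ.2.1.image_eq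

lemma psi_not_filled {ζ : ℂ} (hζ : 1 < ‖ζ‖) : Ψ ζ ∉ filledJulia P :=
  hΨ.2.1.mapsTo hζ

lemma psi_isOpenMapOn :
    ∀ s ⊆ {z : ℂ | 1 < ‖z‖}, IsOpen s → IsOpen (Ψ '' s) := by
  have hana : AnalyticOnNhd ℂ Ψ {z : ℂ | 1 < ‖z‖} := hΨ.1.analyticOnNhd dom_isOpen
  rcases hana.is_constant_or_isOpen dom_preconnected with h | h
  · exfalso
    rcases h with ⟨v, hv⟩
    have h2 : (2:ℂ) ∈ {z : ℂ | 1 < ‖z‖} := by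
      simp only [Set.mem_setOf_eq, Complex.norm_two]; norm_num
    have h3 : (-2:ℂ) ∈ {z : ℂ | 1 < ‖z‖} := by
      simp only [Set.mem_setOf_eq, norm_neg, Complex.norm_two]; norm_num
    have := psi_injOn hΨ h2 h3 (by rw [hv _ h2, hv _ h3])
    norm_num at this
  · exact h

include hd

lemma psi_iterate (k : ℕ) {ζ : ℂ} (hζ : 1 < ‖ζ‖) :
    Ψ (ζ ^ (P.natDegree ^ k)) = (polyMap P)^[k] (Ψ ζ) := by
  induction k generalizing ζ with
  | zero => simp
  | succ k ih =>
    have hζd : 1 < ‖ζ ^ P.natDegree‖ := by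
      rw [norm_pow]
      exact one_lt_pow₀ hζ (by omega)
    have hsplit : ζ ^ P.natDegree ^ (k + 1) = (ζ ^ P.natDegree) ^ P.natDegree ^ k := by
      rw [← pow_mul, ← pow_succ']
    rw [hsplit, ih hζd, hΨ.2.2 ζ hζ, Function.iterate_succ_apply]

omit hΨ in
lemma exists_pow_window {t : ℝ} (ht1 : 1 < t) (ht2 : t ≤ 2) :
    ∃ k : ℕ, 2 ≤ t ^ (P.natDegree ^ k) ∧ t ^ (P.natDegree ^ k) ≤ 2 ^ P.natDegree := by
  classical
  have hd1 : 1 < P.natDegree := by omega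
  have hex : ∃ k : ℕ, 2 ≤ t ^ P.natDegree ^ k := by
    obtain ⟨m, hm⟩ := pow_unbounded_of_one_lt (2:ℝ) ht1
    refine ⟨m, ?_⟩
    have hmle : m ≤ P.natDegree ^ m := le_of_lt (Nat.lt_pow_self (n := m) hd1)
    calc (2:ℝ) ≤ t ^ m := le_of_lt hm
      _ ≤ t ^ P.natDegree ^ m := pow_le_pow_right₀ (le_of_lt ht1) hmle
  refine ⟨Nat.find hex, Nat.find_spec hex, ?_⟩
  rcases Nat.eq_zero_or_pos (Nat.find hex) with h0 | hpos
  · rw [h0, pow_zero, pow_one]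
    calc t ≤ 2 := ht2
      _ = 2 ^ 1 := (pow_one 2).symm
      _ ≤ 2 ^ P.natDegree := pow_le_pow_right₀ one_le_two (by omega)
  · have hlt := Nat.find_min hex (Nat.sub_lt hpos one_pos)
    push_neg at hlt
    have hsplit : P.natDegree ^ Nat.find hex = P.natDegree ^ (Nat.find hex - 1) * P.natDegree := by
      rw [← pow_succ]
      congr 1
      omega
    rw [hsplit, pow_mul]
    refine pow_le_pow_left₀ ?_ (le_of_lt hlt) _
    positivity

lemma psi_bounded :
    ∃ M : ℝ, 0 < M ∧ ∀ ζ : ℂ, 1 < ‖ζ‖ → ‖ζ‖ ≤ 2 →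
      ‖Ψ ζ‖ ≤ M := by
  obtain ⟨R, hR1, hR⟩ := exists_escape hd
  set ann : Set ℂ := (fun z : ℂ => ‖z‖) ⁻¹' Set.Icc 2 (2 ^ P.natDegree) with hann
  have hannsub : ann ⊆ {z : ℂ | 1 < ‖z‖} := fun ζ hζ =>
    lt_of_lt_of_le one_lt_two hζ.1
  have hanncomp : IsCompact ann := by
    refine Metric.isCompact_of_isClosed_isBounded
      (isClosed_Icc.preimage continuous_norm) ?_
    refine Bornology.IsBounded.subset
      (Metric.isBounded_closedBall (x := (0:ℂ)) (r := 2 ^ P.natDegree)) ?_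
    intro ζ hζ
    simp only [Metric.mem_closedBall, Complex.dist_eq, sub_zero]
    exact hζ.2
  have himg : IsCompact (Ψ '' ann) :=
    hanncomp.image_of_continuousOn ((psi_continuousOn hΨ).mono hannsub)
  obtain ⟨R₀, hR₀⟩ := himg.isBounded.subset_closedBall 0
  refine ⟨max R R₀, lt_of_lt_of_le zero_lt_one (le_trans hR1 (le_max_left _ _)), ?_⟩
  intro ζ hζ1 hζ2
  by_contra hM
  push_neg at hM
  have hRψ : R ≤ ‖Ψ ζ‖ := le_of_lt (lt_of_le_of_lt (le_max_left _ _) hM)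
  obtain ⟨k, hk1, hk2⟩ := exists_pow_window (P := P) hd hζ1 hζ2
  have hmem : ζ ^ P.natDegree ^ k ∈ ann := by
    simp only [hann, Set.mem_preimage, Set.mem_Icc, norm_pow]
    exact ⟨hk1, hk2⟩
  have hball := hR₀ ⟨_, hmem, rfl⟩
  rw [Metric.mem_closedBall, Complex.dist_eq, sub_zero] at hball
  rw [psi_iterate hd hΨ k hζ1] at hball
  have hesc := (iterate_escape hd hR1 hR hRψ k).2
  have h2k : (1:ℝ) ≤ 2 ^ k := one_le_pow₀ one_le_two
  have h0 : (0:ℝ) ≤ ‖Ψ ζ‖ := norm_nonneg _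
  have : R₀ ≤ max R R₀ := le_max_right _ _
  nlinarith

/-! #### Impressions -/

lemma impression_subset_julia (α : AddCircle (1:ℝ)) :
    impression Ψ α ⊆ juliaSet P := by
  rintro w ⟨z, hz1, hz2, hz3⟩
  have hKclosed := filledJulia_isClosed hd
  have hwcl : w ∈ closure (filledJulia P)ᶜ := by
    refine mem_closure_of_tendsto hz3 ?_
    filter_upwards with n
    exact psi_not_filled hΨ (hz1 n)
  have hwK : w ∈ filledJulia P := by
    by_contra hw
    have hw' : w ∈ Ψ '' {z : ℂ | 1 < ‖z‖} := by rw [psi_image hΨ]; exact hw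
    obtain ⟨ξ, hξdom, hξw⟩ := hw'
    have hξ1 : 1 < ‖ξ‖ := hξdom
    set ρ := (‖ξ‖ - 1) / 2 with hρ
    have hρpos : 0 < ρ := by rw [hρ]; linarith
    have hopen : IsOpen (Ψ '' (Metric.ball ξ ρ ∩ {z : ℂ | 1 < ‖z‖})) :=
      psi_isOpenMapOn hΨ _ Set.inter_subset_right (Metric.isOpen_ball.inter dom_isOpen)
    have hwmem : w ∈ Ψ '' (Metric.ball ξ ρ ∩ {z : ℂ | 1 < ‖z‖}) :=
      ⟨ξ, ⟨Metric.mem_ball_self hρpos, hξdom⟩, hξw⟩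
    have hev1 : ∀ᶠ n in Filter.atTop,
        Ψ (z n) ∈ Ψ '' (Metric.ball ξ ρ ∩ {z : ℂ | 1 < ‖z‖}) :=
      hz3 (hopen.mem_nhds hwmem)
    have habs : Filter.Tendsto (fun n => ‖z n‖) Filter.atTop (nhds 1) := by
      have := (continuous_norm.tendsto _).comp hz2
      rwa [circlePoint_abs] at this
    have hc : (1:ℝ) < ‖ξ‖ - ρ := by rw [hρ]; linarith
    have hev2 : ∀ᶠ n in Filter.atTop, ‖z n‖ < ‖ξ‖ - ρ :=
      habs.eventually_lt_const hc
    obtain ⟨n, ⟨ζ', ⟨hζ'ball, hζ'dom⟩, hζ'eq⟩, hlt⟩ := (hev1.and hev2).exists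
    have hzn : z n = ζ' := psi_injOn hΨ (hz1 n) hζ'dom hζ'eq.symm
    rw [hzn] at hlt
    rw [Metric.mem_ball, Complex.dist_eq] at hζ'ball
    have : ‖ξ‖ ≤ ‖ξ - ζ'‖ + ‖ζ'‖ := by
      calc ‖ξ‖ = ‖(ξ - ζ') + ζ'‖ := by ring_nf
        _ ≤ _ := norm_add_le _ _
    have habs2 : ‖ζ' - ξ‖ = ‖ξ - ζ'‖ := by
      rw [← neg_sub, norm_neg]
    linarith [hζ'ball, habs2 ▸ hζ'ball]
  rw [juliaSet, hKclosed.frontier_eq]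
  refine ⟨hwK, fun hint => ?_⟩
  rcases mem_closure_iff.mp hwcl _ isOpen_interior hint with ⟨y, hy1, hy2⟩
  exact hy2 (interior_subset hy1)

lemma polyMap_image_impression (γ : AddCircle (1:ℝ)) :
    polyMap P '' impression Ψ γ ⊆ impression Ψ (P.natDegree • γ) := by
  rintro _ ⟨w, ⟨z, hz1, hz2, hz3⟩, rfl⟩
  refine ⟨fun n => z n ^ P.natDegree, fun n => ?_, ?_, ?_⟩
  · rw [norm_pow]
    exact one_lt_pow₀ (hz1 n) (by omega)
  · rw [circlePoint_nsmul]
    exact ((continuous_pow P.natDegree).tendsto _).comp hz2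
  · have heq : (fun n => Ψ (z n ^ P.natDegree)) = fun n => polyMap P (Ψ (z n)) := by
      funext n
      exact hΨ.2.2 (z n) (hz1 n)
    rw [heq]
    exact ((polyMap_continuous hd).tendsto _).comp hz3

lemma impression_nsmul_subset (γ : AddCircle (1:ℝ)) :
    impression Ψ (P.natDegree • γ) ⊆ polyMap P '' impression Ψ γ := by
  rintro v ⟨z, hz1, hz2, hz3⟩
  have hd0 : P.natDegree ≠ 0 := by omega
  set cβ := circlePoint (P.natDegree • γ) with hcβ
  have hcβ0 : cβ ≠ 0 := circlePoint_ne_zero _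
  set g : ℂ → ℂ := fun x => circlePoint γ * (x / cβ) ^ ((P.natDegree : ℂ)⁻¹) with hg
  have habs : ∀ n, ‖g (z n)‖ = ‖z n‖ ^ ((P.natDegree : ℝ)⁻¹) := by
    intro n
    rw [hg]
    simp only
    rw [norm_mul, circlePoint_abs, one_mul, Complex.norm_cpow_inv_nat, norm_div, hcβ,
      circlePoint_abs, div_one]
  have hgt : ∀ n, 1 < ‖g (z n)‖ := by
    intro n
    rw [habs n]
    refine (Real.one_lt_rpow_iff_of_pos ?_).mpr (Or.inl ⟨hz1 n, by positivity⟩)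
    exact lt_trans zero_lt_one (hz1 n)
  have hpow : ∀ n, (g (z n)) ^ P.natDegree = z n := by
    intro n
    rw [hg]
    simp only
    rw [mul_pow, ← circlePoint_nsmul, Complex.cpow_nat_inv_pow _ hd0, ← hcβ, mul_comm,
      div_mul_cancel₀ _ hcβ0]
  have htend : Filter.Tendsto (fun n => g (z n)) Filter.atTop (nhds (circlePoint γ)) := by
    have h1 : Filter.Tendsto (fun n => z n / cβ) Filter.atTop (nhds 1) := by
      have h := hz2.div_const cβ
      rwa [div_self hcβ0] at h
    have h2 : ContinuousAt (fun x : ℂ => x ^ ((P.natDegree : ℂ)⁻¹)) 1 :=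
      continuousAt_cpow_const Complex.one_mem_slitPlane
    have h3 : Filter.Tendsto (fun n => (z n / cβ) ^ ((P.natDegree : ℂ)⁻¹))
        Filter.atTop (nhds 1) := by
      have h4 := h2.tendsto.comp h1
      rwa [Complex.one_cpow] at h4
    have h5 := h3.const_mul (circlePoint γ)
    rwa [mul_one] at h5
  have habs1 : Filter.Tendsto (fun n => ‖g (z n)‖) Filter.atTop (nhds 1) := by
    have h6 := (continuous_norm.tendsto _).comp htend
    rwa [circlePoint_abs] at h6
  obtain ⟨N, hN⟩ := Filter.eventually_atTop.mp (habs1.eventually_lt_const one_lt_two)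
  obtain ⟨M, hM0, hM⟩ := psi_bounded hd hΨ
  set η : ℕ → ℂ := fun k => g (z (N + k)) with hη
  have hηmem : ∀ k, Ψ (η k) ∈ Metric.closedBall (0:ℂ) M := by
    intro k
    rw [Metric.mem_closedBall, Complex.dist_eq, sub_zero]
    exact hM _ (hgt _) (le_of_lt (hN _ (Nat.le_add_right N k)))
  obtain ⟨b, -, φ, hφ, hbtend⟩ :=
    tendsto_subseq_of_bounded Metric.isBounded_closedBall hηmem
  have hidx : Filter.Tendsto (fun k => N + φ k) Filter.atTop Filter.atTop := by
    refine Filter.tendsto_atTop.mpr fun m => Filter.eventually_atTop.mpr ⟨m, fun k hk => ?_⟩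
    calc m ≤ k := hk
      _ ≤ φ k := hφ.le_apply
      _ ≤ N + φ k := Nat.le_add_left _ _
  have hηtend : Filter.Tendsto (fun k => η (φ k)) Filter.atTop (nhds (circlePoint γ)) :=
    htend.comp hidx
  refine ⟨b, ⟨fun k => η (φ k), fun k => hgt _, hηtend, hbtend⟩, ?_⟩
  have hPb : Filter.Tendsto (fun k => polyMap P (Ψ (η (φ k)))) Filter.atTop
      (nhds (polyMap P b)) := ((polyMap_continuous hd).tendsto _).comp hbtend
  have hPb2 : (fun k => polyMap P (Ψ (η (φ k)))) = fun k => Ψ (z (N + φ k)) := by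
    funext k
    rw [← hΨ.2.2 _ (hgt _), hpow]
  rw [hPb2] at hPb
  exact tendsto_nhds_unique hPb (hz3.comp hidx)

lemma preimage_mem_impression {u a : ℂ} {α : AddCircle (1:ℝ)}
    (hu : u ∈ impression Ψ α) (ha : polyMap P a = u) :
    ∃ γ : AddCircle (1:ℝ), P.natDegree • γ = α ∧ a ∈ impression Ψ γ := by
  obtain ⟨z, hz1, hz2, hz3⟩ := hu
  have hd0 : P.natDegree ≠ 0 := by omega
  have hev : ∀ k : ℕ, ∃ n, k ≤ n ∧ Ψ (z n) ∈ polyMap P '' Metric.ball a (1/(k+1) : ℝ) := by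
    intro k
    have hopen := polyMap_isOpenMap hd _ (Metric.isOpen_ball (x := a) (ε := (1/(k+1) : ℝ)))
    have hmem : u ∈ polyMap P '' Metric.ball a (1/(k+1) : ℝ) :=
      ⟨a, Metric.mem_ball_self (by positivity), ha⟩
    have hevk : ∀ᶠ n in Filter.atTop, Ψ (z n) ∈ polyMap P '' Metric.ball a (1/(k+1) : ℝ) :=
      hz3 (hopen.mem_nhds hmem)
    obtain ⟨n, hn1, hn2⟩ := ((Filter.eventually_ge_atTop k).and hevk).exists
    exact ⟨n, hn1, hn2⟩
  choose n hkn hmem using hev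
  have hmem' : ∀ k : ℕ, ∃ a', dist a' a < (1/(k+1) : ℝ) ∧ polyMap P a' = Ψ (z (n k)) := by
    intro k
    obtain ⟨a', hball, hPa⟩ := hmem k
    exact ⟨a', Metric.mem_ball.mp hball, hPa⟩
  choose a' hball hPa using hmem'
  have ha'tend : Filter.Tendsto a' Filter.atTop (nhds a) := by
    rw [tendsto_iff_dist_tendsto_zero]
    refine squeeze_zero (fun k => dist_nonneg) (fun k => le_of_lt (hball k)) ?_
    exact tendsto_one_div_add_atTop_nhds_zero_nat
  have ha'K : ∀ k, a' k ∉ filledJulia P := by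
    intro k hk
    exact psi_not_filled hΨ (hz1 (n k)) ((hPa k) ▸ (mem_filled_iff hd (a' k)).mpr hk)
  have hξex : ∀ k, ∃ ξ, 1 < ‖ξ‖ ∧ Ψ ξ = a' k := by
    intro k
    have : a' k ∈ Ψ '' {z : ℂ | 1 < ‖z‖} := by
      rw [psi_image hΨ]
      exact ha'K k
    obtain ⟨ξ, hξ1, hξ2⟩ := this
    exact ⟨ξ, hξ1, hξ2⟩
  choose ξ hξ1 hξ2 using hξex
  have hξpow : ∀ k, ξ k ^ P.natDegree = z (n k) := by
    intro k
    refine psi_injOn hΨ ?_ (hz1 (n k)) ?_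
    · simp only [Set.mem_setOf_eq, norm_pow]
      exact one_lt_pow₀ (hξ1 k) hd0
    · rw [hΨ.2.2 _ (hξ1 k), hξ2, hPa]
  have hidx0 : Filter.Tendsto n Filter.atTop Filter.atTop :=
    Filter.tendsto_atTop.mpr fun m => Filter.eventually_atTop.mpr ⟨m, fun k hk => le_trans hk (hkn k)⟩
  have habsz : Filter.Tendsto (fun k => ‖z (n k)‖) Filter.atTop (nhds 1) := by
    have h := (continuous_norm.tendsto _).comp (hz2.comp hidx0)
    rwa [circlePoint_abs] at h
  obtain ⟨N, hN⟩ := Filter.eventually_atTop.mp (habsz.eventually_lt_const one_lt_two)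
  have hξle : ∀ k, ‖z (n k)‖ < 2 → ‖ξ k‖ ≤ 2 := by
    intro k hk
    by_contra hgt
    push_neg at hgt
    have h1 : (2:ℝ) ^ P.natDegree ≤ ‖ξ k‖ ^ P.natDegree :=
      pow_le_pow_left₀ (by norm_num) (le_of_lt hgt) _
    have h2 : ‖ξ k‖ ^ P.natDegree = ‖z (n k)‖ := by
      rw [← norm_pow, hξpow]
    have h3 : (2:ℝ) ≤ 2 ^ P.natDegree := by
      calc (2:ℝ) = 2 ^ 1 := (pow_one 2).symm
        _ ≤ 2 ^ P.natDegree := pow_le_pow_right₀ one_le_two (by omega)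
    linarith
  have hηmem : ∀ k, ξ (N + k) ∈ Metric.closedBall (0:ℂ) 2 := by
    intro k
    rw [Metric.mem_closedBall, Complex.dist_eq, sub_zero]
    exact hξle _ (hN _ (Nat.le_add_right N k))
  obtain ⟨ξ', -, φ, hφ, hξtend⟩ :=
    tendsto_subseq_of_bounded Metric.isBounded_closedBall hηmem
  have hidx : Filter.Tendsto (fun k => N + φ k) Filter.atTop Filter.atTop := by
    refine Filter.tendsto_atTop.mpr fun m => Filter.eventually_atTop.mpr ⟨m, fun k hk => ?_⟩
    calc m ≤ k := hk
      _ ≤ φ k := hφ.le_apply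
      _ ≤ N + φ k := Nat.le_add_left _ _
  have hξ'pow : ξ' ^ P.natDegree = circlePoint α := by
    have h1 : Filter.Tendsto (fun k => ξ (N + φ k) ^ P.natDegree) Filter.atTop
        (nhds (ξ' ^ P.natDegree)) := ((continuous_pow P.natDegree).tendsto _).comp hξtend
    have h2 : (fun k => ξ (N + φ k) ^ P.natDegree) = fun k => z (n (N + φ k)) := by
      funext k
      exact hξpow _
    rw [h2] at h1
    exact tendsto_nhds_unique h1 (hz2.comp (hidx0.comp hidx))
  have hξ'abs : ‖ξ'‖ = 1 := by
    have h1 : ‖ξ'‖ ^ P.natDegree = 1 := by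
      rw [← norm_pow, hξ'pow, circlePoint_abs]
    have h0 : (0:ℝ) ≤ ‖ξ'‖ := norm_nonneg _
    rcases lt_trichotomy (‖ξ'‖) 1 with h | h | h
    · exfalso
      have := pow_lt_one₀ h0 h hd0
      rw [h1] at this
      exact lt_irrefl _ this
    · exact h
    · exfalso
      have := one_lt_pow₀ h hd0
      rw [h1] at this
      exact lt_irrefl _ this
  obtain ⟨γ, hγ⟩ := circlePoint_surjective hξ'abs
  refine ⟨γ, ?_, ?_⟩
  · refine circlePoint_injective ?_
    rw [circlePoint_nsmul, hγ, hξ'pow]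
  · refine ⟨fun k => ξ (N + φ k), fun k => hξ1 _, by rw [hγ]; exact hξtend, ?_⟩
    have h2 : (fun k => Ψ (ξ (N + φ k))) = fun k => a' (N + φ k) := by
      funext k
      exact hξ2 _
    rw [h2]
    exact ha'tend.comp hidx

lemma impression_preconnected (α : AddCircle (1:ℝ)) :
    IsPreconnected (impression Ψ α) := by
  obtain ⟨a, ha⟩ : ∃ a : ℝ, (a : AddCircle (1:ℝ)) = α := by
    induction α using QuotientAddGroup.induction_on with
    | H a => exact ⟨a, rfl⟩
  set θ₀ : ℝ := 2 * Real.pi * a with hθ₀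
  have hcp : circlePoint α = Complex.exp ((θ₀ : ℝ) * Complex.I) := by
    rw [← ha, circlePoint, AddCircle.toCircle_apply_mk, Circle.coe_exp, hθ₀]
    norm_num
  set F : ℝ × ℝ → ℂ := fun p => (p.1 : ℂ) * Complex.exp ((p.2 : ℝ) * Complex.I) with hF
  have hFcont : Continuous F :=
    (Complex.continuous_ofReal.comp continuous_fst).mul
      (Complex.continuous_exp.comp ((Complex.continuous_ofReal.comp continuous_snd).mul
        continuous_const))
  set S : ℕ → Set ℂ := fun n =>
    F '' (Set.Ioo (1:ℝ) (1 + 1/((n:ℝ)+1)) ×ˢ Set.Ioo (θ₀ - 1/((n:ℝ)+1)) (θ₀ + 1/((n:ℝ)+1)))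
    with hS
  have hFcp : F (1, θ₀) = circlePoint α := by
    rw [hF, hcp]
    simp
  have hSdom : ∀ n, S n ⊆ {z : ℂ | 1 < ‖z‖} := by
    rintro n _ ⟨⟨s, t⟩, ⟨hs, ht⟩, rfl⟩
    simp only [hF, Set.mem_setOf_eq, norm_mul, Complex.norm_real, Real.norm_eq_abs,
      Complex.norm_exp_ofReal_mul_I, mul_one]
    rw [abs_of_pos (lt_trans zero_lt_one hs.1)]
    exact hs.1
  have hSle : ∀ n, ∀ ζ ∈ S n, ‖ζ‖ ≤ 2 := by
    rintro n _ ⟨⟨s, t⟩, ⟨hs, ht⟩, rfl⟩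
    simp only [hF, norm_mul, Complex.norm_real, Real.norm_eq_abs, Complex.norm_exp_ofReal_mul_I, mul_one]
    rw [abs_of_pos (lt_trans zero_lt_one hs.1)]
    have h1 : (1:ℝ)/((n:ℝ)+1) ≤ 1 := by
      rw [div_le_one (by positivity)]
      have : (0:ℝ) ≤ (n:ℝ) := Nat.cast_nonneg n
      linarith
    have := hs.2
    push_cast at this
    linarith
  obtain ⟨M, hM0, hM⟩ := psi_bounded hd hΨ
  set C : ℕ → Set ℂ := fun n => closure (Ψ '' S n) with hC
  have hCcomp : ∀ n, IsCompact (C n) := by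
    intro n
    refine Metric.isCompact_of_isClosed_isBounded isClosed_closure ?_
    refine Bornology.IsBounded.subset (Metric.isBounded_closedBall (x := (0:ℂ)) (r := M)) ?_
    rw [hC]
    refine closure_minimal ?_ Metric.isClosed_closedBall
    rintro _ ⟨ζ, hζ, rfl⟩
    rw [Metric.mem_closedBall, Complex.dist_eq, sub_zero]
    exact hM ζ (hSdom n hζ) (hSle n ζ hζ)
  have hCconn : ∀ n, IsPreconnected (C n) := by
    intro n
    refine IsPreconnected.closure ?_
    have hSconn : IsPreconnected (S n) := by
      refine IsPreconnected.image ?_ _ hFcont.continuousOn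
      exact ((convex_Ioo _ _).prod (convex_Ioo _ _)).isPreconnected
    exact hSconn.image Ψ ((psi_continuousOn hΨ).mono (hSdom n))
  have hfrac : ∀ n : ℕ, (1:ℝ)/((n:ℝ)+1+1) ≤ 1/((n:ℝ)+1) := by
    intro n
    apply one_div_le_one_div_of_le
    · positivity
    · linarith
  have hanti : ∀ n, C (n+1) ⊆ C n := by
    intro n
    refine closure_mono (Set.image_mono (Set.image_mono ?_))
    have h1 := hfrac n
    push_cast
    refine Set.prod_mono (Set.Ioo_subset_Ioo le_rfl (by linarith))
      (Set.Ioo_subset_Ioo (by linarith) (by linarith))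
  have hEq : impression Ψ α = ⋂ n, C n := by
    ext w
    constructor
    · rintro ⟨z, hz1, hz2, hz3⟩
      rw [Set.mem_iInter]
      intro m
      have habs : Filter.Tendsto (fun k => ‖z k‖) Filter.atTop (nhds 1) := by
        have h := (continuous_norm.tendsto _).comp hz2
        rwa [circlePoint_abs] at h
      have hev1 : ∀ᶠ k in Filter.atTop, ‖z k‖ < 1 + 1/((m:ℝ)+1) := by
        refine habs.eventually_lt_const ?_
        have h0 : (0:ℝ) < 1/((m:ℝ)+1) := by positivity
        linarith
      have hu : Filter.Tendsto (fun k => z k / circlePoint α) Filter.atTop (nhds 1) := by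
        have h := hz2.div_const (circlePoint α)
        rwa [div_self (circlePoint_ne_zero α)] at h
      have harg : Filter.Tendsto (fun k => (z k / circlePoint α).arg) Filter.atTop (nhds 0) := by
        have h := (Complex.continuousAt_arg Complex.one_mem_slitPlane).tendsto.comp hu
        rwa [Complex.arg_one] at h
      have hev2 : ∀ᶠ k in Filter.atTop,
          dist ((z k / circlePoint α).arg) 0 < 1/((m:ℝ)+1) :=
        harg (Metric.ball_mem_nhds _ (by positivity))
      refine mem_closure_of_tendsto hz3 ?_
      filter_upwards [hev1, hev2] with k h1 h2
      refine Set.mem_image_of_mem Ψ ?_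
      rw [Real.dist_eq, sub_zero] at h2
      obtain ⟨h2a, h2b⟩ := abs_lt.mp h2
      have hzk0 : z k / circlePoint α ≠ 0 := by
        refine div_ne_zero ?_ (circlePoint_ne_zero α)
        intro h0
        have h00 := hz1 k
        rw [h0] at h00
        simp at h00
        exact absurd h00 (by norm_num)
      refine ⟨(‖z k‖, θ₀ + (z k / circlePoint α).arg),
        ⟨⟨hz1 k, h1⟩, by constructor <;> [linarith; linarith]⟩, ?_⟩
      show (‖z k‖ : ℂ) *
        Complex.exp ((θ₀ + (z k / circlePoint α).arg : ℝ) * Complex.I) = z k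
      have habsu : ‖z k / circlePoint α‖ = ‖z k‖ := by
        rw [norm_div, circlePoint_abs, div_one]
      push_cast
      rw [add_mul, Complex.exp_add, ← hcp]
      calc (‖z k‖ : ℂ) *
          (circlePoint α * Complex.exp (((z k / circlePoint α).arg : ℝ) * Complex.I))
          = circlePoint α * ((‖z k / circlePoint α‖ : ℂ) *
            Complex.exp (((z k / circlePoint α).arg : ℝ) * Complex.I)) := by
            rw [habsu]; ring
        _ = circlePoint α * (z k / circlePoint α) := by
            rw [Complex.norm_mul_exp_arg_mul_I]
        _ = z k := by
            rw [mul_comm, div_mul_cancel₀ _ (circlePoint_ne_zero α)]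
    · intro hw
      rw [Set.mem_iInter] at hw
      have hch : ∀ m : ℕ, ∃ ζ, ζ ∈ S m ∧ dist w (Ψ ζ) < 1/((m:ℝ)+1) := by
        intro m
        obtain ⟨y, ⟨ζ, hζ, rfl⟩, hy⟩ :=
          Metric.mem_closure_iff.mp (hw m) (1/((m:ℝ)+1)) (by positivity)
        exact ⟨ζ, hζ, hy⟩
      choose ζ hζS hζd using hch
      have hst : ∀ m : ℕ, ∃ st : ℝ × ℝ,
          st ∈ Set.Ioo 1 (1 + 1/((m:ℝ)+1)) ×ˢ Set.Ioo (θ₀ - 1/((m:ℝ)+1)) (θ₀ + 1/((m:ℝ)+1)) ∧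
          F st = ζ m := fun m => by
        obtain ⟨st, h1, h2⟩ := hζS m
        exact ⟨st, h1, h2⟩
      choose st hstmem hFst using hst
      have hfrac0 : Filter.Tendsto (fun m : ℕ => 1/((m:ℝ)+1)) Filter.atTop (nhds 0) :=
        tendsto_one_div_add_atTop_nhds_zero_nat
      have hs1 : Filter.Tendsto (fun m => (st m).1) Filter.atTop (nhds 1) := by
        have hup : Filter.Tendsto (fun m : ℕ => 1 + 1/((m:ℝ)+1)) Filter.atTop (nhds 1) := by
          have := hfrac0.const_add (1:ℝ)
          rwa [add_zero] at this
        refine tendsto_of_tendsto_of_tendsto_of_le_of_le tendsto_const_nhds hup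
          (fun m => le_of_lt (hstmem m).1.1) (fun m => le_of_lt (hstmem m).1.2)
      have hs2 : Filter.Tendsto (fun m => (st m).2) Filter.atTop (nhds θ₀) := by
        have hlo : Filter.Tendsto (fun m : ℕ => θ₀ - 1/((m:ℝ)+1)) Filter.atTop (nhds θ₀) := by
          have := hfrac0.const_sub θ₀
          rwa [sub_zero] at this
        have hup : Filter.Tendsto (fun m : ℕ => θ₀ + 1/((m:ℝ)+1)) Filter.atTop (nhds θ₀) := by
          have := hfrac0.const_add θ₀
          rwa [add_zero] at this
        refine tendsto_of_tendsto_of_tendsto_of_le_of_le hlo hup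
          (fun m => le_of_lt (hstmem m).2.1) (fun m => le_of_lt (hstmem m).2.2)
      have hsttend : Filter.Tendsto st Filter.atTop (nhds (1, θ₀)) := by
        rw [Prod.tendsto_iff]
        exact ⟨hs1, hs2⟩
      have hζtend : Filter.Tendsto ζ Filter.atTop (nhds (circlePoint α)) := by
        have h := (hFcont.tendsto _).comp hsttend
        rw [hFcp] at h
        have heq : (F ∘ st) = ζ := funext hFst
        rwa [heq] at h
      refine ⟨ζ, fun m => hSdom m (hζS m), hζtend, ?_⟩
      rw [tendsto_iff_dist_tendsto_zero]
      refine squeeze_zero (fun m => dist_nonneg) (fun m => ?_) hfrac0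
      rw [dist_comm]
      exact le_of_lt (hζd m)
  rw [hEq]
  exact preconnected_iInter_of_antitone C hCcomp hCconn hanti

end Psi

/-! #### The finest relation -/

section Rel

variable {P : Polynomial ℂ} (hd : 2 ≤ P.natDegree) {Ψ : ℂ → ℂ} (hΨ : BoettcherMap P Ψ)

lemma finestRel_refl (x : ℂ) : finestRel (juliaSet P) Ψ x x :=
  fun _ hr => hr.equivalence.refl x

lemma finestRel_symm {x y : ℂ} (h : finestRel (juliaSet P) Ψ x y) :
    finestRel (juliaSet P) Ψ y x :=
  fun r hr => hr.equivalence.symm (h r hr)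

lemma finestRel_trans {x y z : ℂ} (h1 : finestRel (juliaSet P) Ψ x y)
    (h2 : finestRel (juliaSet P) Ψ y z) : finestRel (juliaSet P) Ψ x z :=
  fun r hr => hr.equivalence.trans (h1 r hr) (h2 r hr)

lemma finestRel_resp {α : AddCircle (1:ℝ)} {x y : ℂ}
    (hx : x ∈ impression Ψ α) (hy : y ∈ impression Ψ α) :
    finestRel (juliaSet P) Ψ x y :=
  fun _ hr => hr.resp α x hx y hy

lemma finestRel_isClosed :
    IsClosed {p : ℂ × ℂ | p.1 ∈ juliaSet P ∧ p.2 ∈ juliaSet P ∧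
      finestRel (juliaSet P) Ψ p.1 p.2} := by
  have hEq : {p : ℂ × ℂ | p.1 ∈ juliaSet P ∧ p.2 ∈ juliaSet P ∧
        finestRel (juliaSet P) Ψ p.1 p.2}
      = (juliaSet P ×ˢ juliaSet P) ∩
        ⋂ (r : {r : ℂ → ℂ → Prop // IsClosedEquivRespImp (juliaSet P) Ψ r}),
          {p : ℂ × ℂ | p.1 ∈ juliaSet P ∧ p.2 ∈ juliaSet P ∧ r.1 p.1 p.2} := by
    ext p
    simp only [Set.mem_inter_iff, Set.mem_prod, Set.mem_iInter, Set.mem_setOf_eq,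
      Subtype.forall]
    constructor
    · rintro ⟨h1, h2, h3⟩
      exact ⟨⟨h1, h2⟩, fun r hr => ⟨h1, h2, h3 r hr⟩⟩
    · rintro ⟨⟨h1, h2⟩, h3⟩
      exact ⟨h1, h2, fun r hr => (h3 r hr).2.2⟩
  rw [hEq]
  exact (isClosed_frontier.prod isClosed_frontier).inter
    (isClosed_iInter fun r => r.2.closedGraph)

include hd hΨ

lemma valid_pullback {r : ℂ → ℂ → Prop} (hr : IsClosedEquivRespImp (juliaSet P) Ψ r) :
    IsClosedEquivRespImp (juliaSet P) Ψ
      (fun u v => r (polyMap P u) (polyMap P v)) := by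
  constructor
  · exact ⟨fun x => hr.equivalence.refl _, fun h => hr.equivalence.symm h,
      fun h1 h2 => hr.equivalence.trans h1 h2⟩
  · have hEq : {p : ℂ × ℂ | p.1 ∈ juliaSet P ∧ p.2 ∈ juliaSet P ∧
          r (polyMap P p.1) (polyMap P p.2)}
        = (juliaSet P ×ˢ juliaSet P) ∩
          ((fun p : ℂ × ℂ => (polyMap P p.1, polyMap P p.2)) ⁻¹'
            {p : ℂ × ℂ | p.1 ∈ juliaSet P ∧ p.2 ∈ juliaSet P ∧ r p.1 p.2}) := by
      ext p
      simp only [Set.mem_inter_iff, Set.mem_prod, Set.mem_preimage, Set.mem_setOf_eq]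
      constructor
      · rintro ⟨h1, h2, h3⟩
        exact ⟨⟨h1, h2⟩, polyMap_mapsTo_julia hd h1, polyMap_mapsTo_julia hd h2, h3⟩
      · rintro ⟨⟨h1, h2⟩, -, -, h3⟩
        exact ⟨h1, h2, h3⟩
    rw [hEq]
    refine (isClosed_frontier.prod isClosed_frontier).inter (IsClosed.preimage ?_ hr.closedGraph)
    exact ((polyMap_continuous hd).comp continuous_fst).prodMk
      ((polyMap_continuous hd).comp continuous_snd)
  · intro α x hx y hy
    exact hr.resp (P.natDegree • α) _ (polyMap_image_impression hd hΨ α ⟨x, hx, rfl⟩)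
      _ (polyMap_image_impression hd hΨ α ⟨y, hy, rfl⟩)

lemma finestRel_map {x y : ℂ} (h : finestRel (juliaSet P) Ψ x y) :
    finestRel (juliaSet P) Ψ (polyMap P x) (polyMap P y) :=
  fun r hr => h _ (valid_pullback hd hΨ hr)

lemma valid_component :
    IsClosedEquivRespImp (juliaSet P) Ψ
      (fun u v => finestRel (juliaSet P) Ψ u v ∧
        ((u ∈ juliaSet P ∨ v ∈ juliaSet P) → u ∈ juliaSet P ∧ v ∈ juliaSet P ∧
          v ∈ connectedComponentIn {y ∈ juliaSet P | finestRel (juliaSet P) Ψ u y} u)) := by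
  have hQc : IsClosed (juliaSet P) := isClosed_frontier
  have hQcomp : IsCompact (juliaSet P) := juliaSet_isCompact hd
  constructor
  · constructor
    · intro x
      refine ⟨finestRel_refl x, fun h => ?_⟩
      rcases h with h | h <;>
        exact ⟨h, h, mem_connectedComponentIn ⟨h, finestRel_refl x⟩⟩
    · rintro x y ⟨h1, h2⟩
      refine ⟨finestRel_symm h1, fun h => ?_⟩
      obtain ⟨hxQ, hyQ, hcc⟩ := h2 h.symm
      refine ⟨hyQ, hxQ, ?_⟩
      have hsets : {w ∈ juliaSet P | finestRel (juliaSet P) Ψ x w}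
          = {w ∈ juliaSet P | finestRel (juliaSet P) Ψ y w} := by
        ext w
        exact ⟨fun hw => ⟨hw.1, finestRel_trans (finestRel_symm h1) hw.2⟩,
          fun hw => ⟨hw.1, finestRel_trans h1 hw.2⟩⟩
      have hxmem : x ∈ connectedComponentIn
          {w ∈ juliaSet P | finestRel (juliaSet P) Ψ x w} x :=
        mem_connectedComponentIn ⟨hxQ, finestRel_refl x⟩
      rw [connectedComponentIn_eq hcc] at hxmem
      rwa [hsets] at hxmem
    · rintro x y z ⟨h1, h2⟩ ⟨h3, h4⟩
      refine ⟨finestRel_trans h1 h3, fun h => ?_⟩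
      have hkey : x ∈ juliaSet P ∨ y ∈ juliaSet P := by
        rcases h with h | h
        · exact Or.inl h
        · exact Or.inr (h4 (Or.inr h)).1
      obtain ⟨hxQ, hyQ, hccxy⟩ := h2 hkey
      obtain ⟨-, hzQ, hccyz⟩ := h4 (Or.inl hyQ)
      refine ⟨hxQ, hzQ, ?_⟩
      have hsets : {w ∈ juliaSet P | finestRel (juliaSet P) Ψ y w}
          = {w ∈ juliaSet P | finestRel (juliaSet P) Ψ x w} := by
        ext w
        exact ⟨fun hw => ⟨hw.1, finestRel_trans h1 hw.2⟩,
          fun hw => ⟨hw.1, finestRel_trans (finestRel_symm h1) hw.2⟩⟩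
      rw [hsets] at hccyz
      rwa [← connectedComponentIn_eq hccxy] at hccyz
  · -- closedness
    refine IsSeqClosed.isClosed fun pn p hpn htend => ?_
    have hu : Filter.Tendsto (fun n => (pn n).1) Filter.atTop (nhds p.1) :=
      (continuous_fst.tendsto p).comp htend
    have hv : Filter.Tendsto (fun n => (pn n).2) Filter.atTop (nhds p.2) :=
      (continuous_snd.tendsto p).comp htend
    have huQ : ∀ n, (pn n).1 ∈ juliaSet P := fun n => (hpn n).1
    have hvQ : ∀ n, (pn n).2 ∈ juliaSet P := fun n => (hpn n).2.1
    have hrel : ∀ n, finestRel (juliaSet P) Ψ (pn n).1 (pn n).2 := fun n => (hpn n).2.2.1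
    have hp1Q : p.1 ∈ juliaSet P := hQc.mem_of_tendsto hu (Filter.Eventually.of_forall huQ)
    have hp2Q : p.2 ∈ juliaSet P := hQc.mem_of_tendsto hv (Filter.Eventually.of_forall hvQ)
    have hrelp : finestRel (juliaSet P) Ψ p.1 p.2 := by
      have h := (finestRel_isClosed (P := P) (Ψ := Ψ)).mem_of_tendsto htend
        (Filter.Eventually.of_forall fun n => ⟨huQ n, hvQ n, hrel n⟩)
      exact h.2.2
    set cls : ℂ → Set ℂ := fun x => {w ∈ juliaSet P | finestRel (juliaSet P) Ψ x w} with hcls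
    set K : ℕ → Set ℂ := fun n => connectedComponentIn (cls ((pn n).1)) ((pn n).1) with hK
    set L : Set ℂ := ⋂ N : ℕ, closure (⋃ n ∈ Set.Ici N, K n) with hL
    have hKQ : ∀ n, K n ⊆ juliaSet P := fun n =>
      (connectedComponentIn_subset _ _).trans (Set.sep_subset _ _)
    have hself : ∀ n, (pn n).1 ∈ K n := fun n =>
      mem_connectedComponentIn ⟨huQ n, finestRel_refl _⟩
    have hvK : ∀ n, (pn n).2 ∈ K n := fun n => ((hpn n).2.2.2 (Or.inl (huQ n))).2.2
    have hmemL : ∀ (w : ℂ) (wn : ℕ → ℂ), (∀ j, wn j ∈ K j) →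
        Filter.Tendsto wn Filter.atTop (nhds w) → w ∈ L := by
      intro w wn hwn hwt
      rw [hL, Set.mem_iInter]
      intro N
      refine mem_closure_of_tendsto hwt ?_
      filter_upwards [Filter.eventually_ge_atTop N] with j hj
      exact Set.mem_biUnion hj (hwn j)
    have hp1L : p.1 ∈ L := hmemL p.1 _ hself hu
    have hp2L : p.2 ∈ L := hmemL p.2 _ hvK hv
    have hLQ_rel : ∀ w ∈ L, w ∈ juliaSet P ∧ finestRel (juliaSet P) Ψ p.1 w := by
      intro w hw
      have hex : ∀ j : ℕ, ∃ m, j ≤ m ∧ ∃ y, y ∈ K m ∧ dist w y < 1/((j:ℝ)+1) := by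
        intro j
        have hwj := Set.mem_iInter.mp hw j
        obtain ⟨y, hy, hdy⟩ := Metric.mem_closure_iff.mp hwj (1/((j:ℝ)+1)) (by positivity)
        simp only [Set.mem_iUnion, Set.mem_Ici] at hy
        obtain ⟨m, hm, hym⟩ := hy
        exact ⟨m, hm, y, hym, hdy⟩
      choose m hjm y hyK hyd using hex
      have hytend : Filter.Tendsto y Filter.atTop (nhds w) := by
        have h := squeeze_zero (g := fun j : ℕ => 1/((j:ℝ)+1)) (fun j => dist_nonneg)
          (fun j => le_of_lt (hyd j)) tendsto_one_div_add_atTop_nhds_zero_nat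
        rw [tendsto_iff_dist_tendsto_zero]
        simpa [dist_comm] using h
      have hmtend : Filter.Tendsto m Filter.atTop Filter.atTop :=
        Filter.tendsto_atTop.mpr fun b =>
          Filter.eventually_atTop.mpr ⟨b, fun j hj => le_trans hj (hjm j)⟩
      have hutend : Filter.Tendsto (fun j => (pn (m j)).1) Filter.atTop (nhds p.1) :=
        hu.comp hmtend
      have h := (finestRel_isClosed (P := P) (Ψ := Ψ)).mem_of_tendsto
        (hutend.prodMk_nhds hytend)
        (Filter.Eventually.of_forall fun j => by
          have h6 : y j ∈ cls ((pn (m j)).1) := connectedComponentIn_subset _ _ (hyK j)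
          exact ⟨huQ (m j), h6.1, h6.2⟩)
      exact ⟨h.2.1, h.2.2⟩
    have hLconn : IsPreconnected L := by
      intro U V hU hV hcov ⟨x1, hx1L, hx1U⟩ ⟨x2, hx2L, hx2V⟩
      by_contra hnonempty
      rw [Set.not_nonempty_iff_eq_empty] at hnonempty
      have hne' := Set.eq_empty_iff_forall_notMem.mp hnonempty
      have hLclosed : IsClosed L := isClosed_iInter fun N => isClosed_closure
      set A := L \ V with hA
      set B := L \ U with hB
      have hAclosed : IsClosed A := hLclosed.sdiff hV
      have hBclosed : IsClosed B := hLclosed.sdiff hU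
      have hdisj : Disjoint A B := by
        rw [Set.disjoint_left]
        rintro t ⟨ht1, ht2⟩ ⟨ht3, ht4⟩
        rcases hcov ht1 with h | h
        exacts [ht4 h, ht2 h]
      obtain ⟨U', V', hU', hV', hAU', hBV', hd'⟩ := normal_separation hAclosed hBclosed hdisj
      have hLsub : L ⊆ U' ∪ V' := by
        intro t ht
        by_cases htV : t ∈ V
        · by_cases htU : t ∈ U
          · exact absurd ⟨ht, htU, htV⟩ (hne' t)
          · exact Or.inr (hBV' ⟨ht, htU⟩)
        · exact Or.inl (hAU' ⟨ht, htV⟩)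
      have hx1A : x1 ∈ A := ⟨hx1L, fun hx1V => hne' x1 ⟨hx1L, hx1U, hx1V⟩⟩
      have hx2B : x2 ∈ B := ⟨hx2L, fun hx2U => hne' x2 ⟨hx2L, hx2U, hx2V⟩⟩
      have hstep1 : ∃ N₁ : ℕ, ∀ n, N₁ ≤ n → K n ⊆ U' ∪ V' := by
        by_contra hno
        push_neg at hno
        have hex2 : ∀ j : ℕ, ∃ nn, j ≤ nn ∧ ∃ ww, ww ∈ K nn ∧ ww ∉ U' ∪ V' := by
          intro j
          obtain ⟨nn, hnn, hnsub⟩ := hno j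
          obtain ⟨ww, hww1, hww2⟩ := Set.not_subset.mp hnsub
          exact ⟨nn, hnn, ww, hww1, hww2⟩
        choose nn hnn ww hwwK hwwU using hex2
        obtain ⟨wst, hwstQ, φ, hφ, hwtend⟩ := hQcomp.tendsto_subseq fun j => hKQ _ (hwwK j)
        have hwstL : wst ∈ L := by
          rw [hL, Set.mem_iInter]
          intro N
          refine mem_closure_of_tendsto hwtend ?_
          filter_upwards [Filter.eventually_ge_atTop N] with j hj
          exact Set.mem_biUnion
            (le_trans hj (le_trans hφ.le_apply (hnn (φ j)))) (hwwK (φ j))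
        have hwstUV : wst ∉ U' ∪ V' := by
          have hcl : IsClosed ((U' ∪ V')ᶜ) := (hU'.union hV').isClosed_compl
          exact hcl.mem_of_tendsto hwtend (Filter.Eventually.of_forall fun j => hwwU (φ j))
        exact hwstUV (hLsub hwstL)
      obtain ⟨N₁, hN₁⟩ := hstep1
      have hmeet : ∀ W : Set ℂ, IsOpen W → ∀ xx, xx ∈ L → xx ∈ W →
          ∀ N : ℕ, ∃ n, N ≤ n ∧ (K n ∩ W).Nonempty := by
        intro W hW xx hxxL hxxW N
        have h7 := Set.mem_iInter.mp hxxL N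
        rcases _root_.mem_closure_iff.mp h7 W hW hxxW with ⟨t, htW, htU⟩
        simp only [Set.mem_iUnion, Set.mem_Ici] at htU
        obtain ⟨n, hn, htn⟩ := htU
        exact ⟨n, hn, t, htn, htW⟩
      rcases hLsub hp1L with hp1U' | hp1V'
      · obtain ⟨N₂, hN₂⟩ := Filter.eventually_atTop.mp (hu (hU'.mem_nhds hp1U'))
        obtain ⟨n, hn, yv, hyvK, hyvV'⟩ :=
          hmeet V' hV' x2 hx2L (hBV' hx2B) (max N₁ N₂)
        obtain ⟨t, ht1, ht2, ht3⟩ :=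
          isPreconnected_connectedComponentIn U' V' hU' hV'
            (hN₁ n (le_trans (le_max_left _ _) hn))
            ⟨(pn n).1, hself n, hN₂ n (le_trans (le_max_right _ _) hn)⟩
            ⟨yv, hyvK, hyvV'⟩
        exact Set.disjoint_left.mp hd' ht2 ht3
      · obtain ⟨N₂, hN₂⟩ := Filter.eventually_atTop.mp (hu (hV'.mem_nhds hp1V'))
        obtain ⟨n, hn, yu, hyuK, hyuU'⟩ :=
          hmeet U' hU' x1 hx1L (hAU' hx1A) (max N₁ N₂)
        obtain ⟨t, ht1, ht2, ht3⟩ :=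
          isPreconnected_connectedComponentIn U' V' hU' hV'
            (hN₁ n (le_trans (le_max_left _ _) hn))
            ⟨yu, hyuK, hyuU'⟩
            ⟨(pn n).1, hself n, hN₂ n (le_trans (le_max_right _ _) hn)⟩
        exact Set.disjoint_left.mp hd' ht2 ht3
    have hLsubcls : L ⊆ cls p.1 := fun w hw => ⟨(hLQ_rel w hw).1, (hLQ_rel w hw).2⟩
    exact ⟨hp1Q, hp2Q, hrelp, fun _ => ⟨hp1Q, hp2Q,
      hLconn.subset_connectedComponentIn hp1L hLsubcls hp2L⟩⟩
  · intro α x hx y hy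
    have hxQ := impression_subset_julia hd hΨ α hx
    have hyQ := impression_subset_julia hd hΨ α hy
    refine ⟨finestRel_resp hx hy, fun _ => ⟨hxQ, hyQ, ?_⟩⟩
    have hsub : impression Ψ α ⊆ {w ∈ juliaSet P | finestRel (juliaSet P) Ψ x w} :=
      fun t ht => ⟨impression_subset_julia hd hΨ α ht, finestRel_resp hx ht⟩
    exact (impression_preconnected hd hΨ α).subset_connectedComponentIn hx hsub hy

lemma class_eq_component {x : ℂ} (hx : x ∈ juliaSet P) :
    connectedComponentIn {y ∈ juliaSet P | finestRel (juliaSet P) Ψ x y} x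
      = {y ∈ juliaSet P | finestRel (juliaSet P) Ψ x y} := by
  refine Set.Subset.antisymm (connectedComponentIn_subset _ _) ?_
  rintro y ⟨hyQ, hrel⟩
  have h := hrel _ (valid_component hd hΨ)
  exact (h.2 (Or.inl hx)).2.2

lemma lift_limit {u v : ℂ} {un vn : ℕ → ℂ}
    (huQ : ∀ n, un n ∈ juliaSet P) (hvQ : ∀ n, vn n ∈ juliaSet P)
    (hu : Filter.Tendsto un Filter.atTop (nhds u)) (hv : Filter.Tendsto vn Filter.atTop (nhds v))
    (hlift : ∀ n, ∀ a ∈ juliaSet P, polyMap P a = un n →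
      ∃ b, b ∈ juliaSet P ∧ polyMap P b = vn n ∧ finestRel (juliaSet P) Ψ a b) :
    ∀ a ∈ juliaSet P, polyMap P a = u →
      ∃ b, b ∈ juliaSet P ∧ polyMap P b = v ∧ finestRel (juliaSet P) Ψ a b := by
  intro a haQ haP
  have hstep : ∀ k : ℕ, ∃ nk, k ≤ nk ∧ ∃ a', a' ∈ juliaSet P ∧ polyMap P a' = un nk ∧
      dist a' a < 1/((k:ℝ)+1) := by
    intro k
    have hopen := polyMap_isOpenMap hd _ (Metric.isOpen_ball (x := a) (ε := (1/((k:ℝ)+1))))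
    have hmemu : u ∈ polyMap P '' Metric.ball a (1/((k:ℝ)+1)) :=
      ⟨a, Metric.mem_ball_self (by positivity), haP⟩
    have hev : ∀ᶠ n in Filter.atTop, un n ∈ polyMap P '' Metric.ball a (1/((k:ℝ)+1)) :=
      hu (hopen.mem_nhds hmemu)
    obtain ⟨nk, hk1, hk2⟩ := ((Filter.eventually_ge_atTop k).and hev).exists
    obtain ⟨a', hball, hPa⟩ := hk2
    refine ⟨nk, hk1, a', ?_, hPa, Metric.mem_ball.mp hball⟩
    exact polyMap_preimage_julia hd (hPa ▸ huQ nk)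
  choose nk hnk a' ha'Q ha'P ha'd using hstep
  have hbex : ∀ k, ∃ b, b ∈ juliaSet P ∧ polyMap P b = vn (nk k) ∧
      finestRel (juliaSet P) Ψ (a' k) b :=
    fun k => hlift (nk k) (a' k) (ha'Q k) (ha'P k)
  choose b hbQ hbP hbrel using hbex
  obtain ⟨bs, hbsQ, φ, hφ, hbtend⟩ := (juliaSet_isCompact hd).tendsto_subseq hbQ
  have hidx : Filter.Tendsto (fun k => nk (φ k)) Filter.atTop Filter.atTop :=
    Filter.tendsto_atTop.mpr fun c => Filter.eventually_atTop.mpr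
      ⟨c, fun k hk => le_trans hk (le_trans hφ.le_apply (hnk (φ k)))⟩
  have ha'full : Filter.Tendsto a' Filter.atTop (nhds a) := by
    rw [tendsto_iff_dist_tendsto_zero]
    exact squeeze_zero (fun k => dist_nonneg) (fun k => le_of_lt (ha'd k))
      tendsto_one_div_add_atTop_nhds_zero_nat
  have ha'tend : Filter.Tendsto (fun k => a' (φ k)) Filter.atTop (nhds a) :=
    ha'full.comp hφ.tendsto_atTop
  have hPbs : polyMap P bs = v := by
    have h1 : Filter.Tendsto (fun k => polyMap P (b (φ k))) Filter.atTop
        (nhds (polyMap P bs)) := ((polyMap_continuous hd).tendsto _).comp hbtend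
    have h2 : (fun k => polyMap P (b (φ k))) = fun k => vn (nk (φ k)) := by
      funext k
      exact hbP (φ k)
    rw [h2] at h1
    exact tendsto_nhds_unique h1 (hv.comp hidx)
  have hrels : finestRel (juliaSet P) Ψ a bs := by
    have h := (finestRel_isClosed (P := P) (Ψ := Ψ)).mem_of_tendsto
      (ha'tend.prodMk_nhds hbtend)
      (Filter.Eventually.of_forall fun k => ⟨ha'Q (φ k), hbQ (φ k), hbrel (φ k)⟩)
    exact h.2.2
  exact ⟨bs, hbsQ, hPbs, hrels⟩

lemma valid_lift :
    IsClosedEquivRespImp (juliaSet P) Ψ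
      (fun u v => finestRel (juliaSet P) Ψ u v ∧
        (∀ a ∈ juliaSet P, polyMap P a = u →
          ∃ b, b ∈ juliaSet P ∧ polyMap P b = v ∧ finestRel (juliaSet P) Ψ a b) ∧
        (∀ a ∈ juliaSet P, polyMap P a = v →
          ∃ b, b ∈ juliaSet P ∧ polyMap P b = u ∧ finestRel (juliaSet P) Ψ a b)) := by
  constructor
  · constructor
    · intro x
      exact ⟨finestRel_refl x, fun a haQ haP => ⟨a, haQ, haP, finestRel_refl a⟩,
        fun a haQ haP => ⟨a, haQ, haP, finestRel_refl a⟩⟩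
    · rintro x y ⟨h1, h2, h3⟩
      exact ⟨finestRel_symm h1, h3, h2⟩
    · rintro x y z ⟨h1, h2, h3⟩ ⟨h4, h5, h6⟩
      refine ⟨finestRel_trans h1 h4, ?_, ?_⟩
      · intro a haQ haP
        obtain ⟨bb, hbQ, hbP, hab⟩ := h2 a haQ haP
        obtain ⟨cc, hcQ, hcP, hbc⟩ := h5 bb hbQ hbP
        exact ⟨cc, hcQ, hcP, finestRel_trans hab hbc⟩
      · intro a haQ haP
        obtain ⟨bb, hbQ, hbP, hab⟩ := h6 a haQ haP
        obtain ⟨cc, hcQ, hcP, hbc⟩ := h3 bb hbQ hbP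
        exact ⟨cc, hcQ, hcP, finestRel_trans hab hbc⟩
  · refine IsSeqClosed.isClosed fun pn p hpn htend => ?_
    have hu : Filter.Tendsto (fun n => (pn n).1) Filter.atTop (nhds p.1) :=
      (continuous_fst.tendsto p).comp htend
    have hv : Filter.Tendsto (fun n => (pn n).2) Filter.atTop (nhds p.2) :=
      (continuous_snd.tendsto p).comp htend
    have huQ : ∀ n, (pn n).1 ∈ juliaSet P := fun n => (hpn n).1
    have hvQ : ∀ n, (pn n).2 ∈ juliaSet P := fun n => (hpn n).2.1
    have hp1Q : p.1 ∈ juliaSet P :=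
      isClosed_frontier.mem_of_tendsto hu (Filter.Eventually.of_forall huQ)
    have hp2Q : p.2 ∈ juliaSet P :=
      isClosed_frontier.mem_of_tendsto hv (Filter.Eventually.of_forall hvQ)
    have hrelp : finestRel (juliaSet P) Ψ p.1 p.2 := by
      have h := (finestRel_isClosed (P := P) (Ψ := Ψ)).mem_of_tendsto htend
        (Filter.Eventually.of_forall fun n => ⟨huQ n, hvQ n, (hpn n).2.2.1⟩)
      exact h.2.2
    refine ⟨hp1Q, hp2Q, hrelp, ?_, ?_⟩
    · exact lift_limit hd hΨ huQ hvQ hu hv (fun n => (hpn n).2.2.2.1)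
    · exact lift_limit hd hΨ hvQ huQ hv hu (fun n => (hpn n).2.2.2.2)
  · intro α x hx y hy
    refine ⟨finestRel_resp hx hy, ?_, ?_⟩
    · intro a haQ haP
      obtain ⟨γ, hγ, haImp⟩ := preimage_mem_impression hd hΨ hx haP
      have hyImp : y ∈ impression Ψ (P.natDegree • γ) := by rw [hγ]; exact hy
      obtain ⟨bb, hbImp, hbP⟩ := impression_nsmul_subset hd hΨ γ hyImp
      exact ⟨bb, impression_subset_julia hd hΨ γ hbImp, hbP, finestRel_resp haImp hbImp⟩
    · intro a haQ haP
      obtain ⟨γ, hγ, haImp⟩ := preimage_mem_impression hd hΨ hy haP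
      have hxImp : x ∈ impression Ψ (P.natDegree • γ) := by rw [hγ]; exact hx
      obtain ⟨bb, hbImp, hbP⟩ := impression_nsmul_subset hd hΨ γ hxImp
      exact ⟨bb, impression_subset_julia hd hΨ γ hbImp, hbP, finestRel_resp haImp hbImp⟩

lemma class_image {x : ℂ} (hx : x ∈ juliaSet P) :
    polyMap P '' {y ∈ juliaSet P | finestRel (juliaSet P) Ψ x y}
      = {y ∈ juliaSet P | finestRel (juliaSet P) Ψ (polyMap P x) y} := by
  ext w
  constructor
  · rintro ⟨y, ⟨hyQ, hrel⟩, rfl⟩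
    exact ⟨polyMap_mapsTo_julia hd hyQ, finestRel_map hd hΨ hrel⟩
  · rintro ⟨hwQ, hrel⟩
    have h := hrel _ (valid_lift hd hΨ)
    obtain ⟨bb, hbQ, hbP, hxb⟩ := h.2.1 x hx rfl
    exact ⟨bb, ⟨hbQ, hxb⟩, hbP⟩

end Rel

end FinestAux
/-- The finest partition `𝒟` of the connected Julia set `J_P` is invariant:
the image of any element of `𝒟` under `P` is again an element of `𝒟`. -/
theorem finestPartition_forward_invariant (P : Polynomial ℂ) (hd : 2 ≤ P.natDegree)
    (hconn : IsConnected (juliaSet P)) (Ψ : ℂ → ℂ) (hΨ : BoettcherMap P Ψ) :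
    ∀ D ∈ finestPartition (juliaSet P) Ψ,
      polyMap P '' D ∈ finestPartition (juliaSet P) Ψ := by
  rintro D ⟨x, hx, rfl⟩
  refine ⟨polyMap P x, FinestAux.polyMap_mapsTo_julia hd hx, ?_⟩
  rw [FinestAux.class_eq_component hd hΨ hx,
    FinestAux.class_image hd hΨ hx,
    FinestAux.class_eq_component hd hΨ (FinestAux.polyMap_mapsTo_julia hd hx)]

end
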